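/- arXiv:2305.13847 — 2 statements merged into one kernel-verified Lean document; each statement's English description precedes it below -/
import Mathlib

section
/- Let e_ref, T_ref, R_v, L_ref > 0 and c_pv, c_l ∈ ℝ with c_l > c_pv, and define e_s : (0, ∞) → ℝ by e_s(T) = e_ref · (T/T_ref)^{(c_pv − c_l)/R_v} · exp( ((L_ref − (c_pv − c_l) T_ref)/R_v) · (1/T_ref − 1/T) ). Then e_s is strictly increasing on the interval (0, T_ref + L_ref/(c_l − c_pv)); that is, the saturation vapour pressure is strictly increasing in temperature on the whole range where the linearised latent heat L(T) = L_ref + (c_pv − c_l)(T − T_ref) is positive. -/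
/-- The saturation vapour pressure is strictly increasing in temperature on the whole
range `(0, T_ref + L_ref/(c_l − c_pv))` where the linearised latent heat
`L(T) = L_ref + (c_pv − c_l)(T − T_ref)` is positive. -/
theorem saturation_vapour_pressure_strictMono
    (e_ref T_ref R_v L_ref : ℝ)
    (he_ref : 0 < e_ref) (hT_ref : 0 < T_ref) (hR_v : 0 < R_v) (hL_ref : 0 < L_ref)
    (c_pv c_l : ℝ) (hcl : c_pv < c_l)
    (es : ℝ → ℝ)
    (hes : ∀ T : ℝ, es T =
      e_ref * (T / T_ref) ^ ((c_pv - c_l) / R_v)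
        * Real.exp ((L_ref - (c_pv - c_l) * T_ref) / R_v * (1 / T_ref - 1 / T))) :
    StrictMonoOn es (Set.Ioo 0 (T_ref + L_ref / (c_l - c_pv))) := by
  set a : ℝ := (c_pv - c_l) / R_v with ha
  set b : ℝ := (L_ref - (c_pv - c_l) * T_ref) / R_v with hb
  set M : ℝ := T_ref + L_ref / (c_l - c_pv) with hMdef
  have hclpos : 0 < c_l - c_pv := sub_pos.mpr hcl
  have haneg : a < 0 := div_neg_of_neg_of_pos (by linarith) hR_v
  have hbpos : 0 < b := by
    apply div_pos _ hR_v
    nlinarith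
  have hMb : a * M + b = 0 := by
    rw [ha, hb, hMdef]
    field_simp
    ring
  -- strict monotonicity of g T = a * log T - b / T on Ioo 0 M
  have hg : StrictMonoOn (fun T : ℝ => a * Real.log T - b / T) (Set.Ioo 0 M) := by
    apply strictMonoOn_of_deriv_pos (convex_Ioo 0 M)
    · apply ContinuousOn.sub
      · exact (Real.continuousOn_log.mono (by
          intro x hx
          exact ne_of_gt hx.1)).const_smul a
      · exact continuousOn_const.div continuousOn_id (fun x hx => ne_of_gt hx.1)
    · intro x hx
      rw [interior_Ioo] at hx
      have hx0 : 0 < x := hx.1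
      have hd : HasDerivAt (fun T : ℝ => a * Real.log T - b / T)
          (a * x⁻¹ - b * -(x ^ 2)⁻¹) x := by
        have h1 := (Real.hasDerivAt_log (ne_of_gt hx0)).const_mul a
        have h2 := (hasDerivAt_inv (ne_of_gt hx0)).const_mul b
        simpa [div_eq_mul_inv, Pi.sub_def] using h1.sub h2
      rw [hd.deriv]
      have hkey : 0 < a * x + b := by nlinarith [hx.2, mul_pos hx0 hx0]
      have : a * x⁻¹ - b * -(x ^ 2)⁻¹ = (a * x + b) / x ^ 2 := by
        field_simp
        ring
      rw [this]
      positivity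
  intro x hx y hy hxy
  have hxT : 0 < x / T_ref := div_pos hx.1 hT_ref
  have hyT : 0 < y / T_ref := div_pos hy.1 hT_ref
  rw [hes, hes, Real.rpow_def_of_pos hxT, Real.rpow_def_of_pos hyT,
    mul_assoc, mul_assoc, ← Real.exp_add, ← Real.exp_add]
  apply mul_lt_mul_of_pos_left _ he_ref
  apply Real.exp_lt_exp.mpr
  have hgx := hg hx hy hxy
  have hlx : Real.log (x / T_ref) = Real.log x - Real.log T_ref :=
    Real.log_div (ne_of_gt hx.1) (ne_of_gt hT_ref)
  have hly : Real.log (y / T_ref) = Real.log y - Real.log T_ref :=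
    Real.log_div (ne_of_gt hy.1) (ne_of_gt hT_ref)
  simp only at hgx
  rw [hlx, hly]
  have h1 : Real.log (x / T_ref) * a + b * (1 / T_ref - 1 / x)
      = (a * Real.log x - b / x) + (b / T_ref - a * Real.log T_ref) := by
    rw [hlx]; ring
  have h2 : Real.log (y / T_ref) * a + b * (1 / T_ref - 1 / y)
      = (a * Real.log y - b / y) + (b / T_ref - a * Real.log T_ref) := by
    rw [hly]; ring
  rw [hlx] at h1; rw [hly] at h2
  calc (Real.log x - Real.log T_ref) * a + b * (1 / T_ref - 1 / x)
      = (a * Real.log x - b / x) + (b / T_ref - a * Real.log T_ref) := by ring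
    _ < (a * Real.log y - b / y) + (b / T_ref - a * Real.log T_ref) := by linarith
    _ = (Real.log y - Real.log T_ref) * a + b * (1 / T_ref - 1 / y) := by ring
end

section
/- Let e_ref, T_ref, R_v, c_vd, c_vv, c_l > 0 and L_ref ∈ ℝ, set c_pv := c_vv + R_v, let e_s(T) = e_ref · (T/T_ref)^{(c_pv − c_l)/R_v} · exp( ((L_ref − (c_pv − c_l) T_ref)/R_v) · (1/T_ref − 1/T) ) for T > 0, and L(T) = L_ref + (c_pv − c_l)(T − T_ref). Fix ρ_d > 0 and ρ_m, ρ_r ≥ 0, and define ρ_v(T) := min( e_s(T)/(R_v T), ρ_m ), ρ_c(T) := ρ_m − ρ_v(T), and E_int(T) := (c_vd ρ_d + c_vv ρ_v(T) + c_l (ρ_c(T) + ρ_r)) (T − T_ref) + ρ_v(T) (L_ref − R_v T_ref). Let J ⊆ (0, ∞) be an interval on which L(T) − R_v T > 0. Then E_int is strictly increasing on J; consequently, for every ε ∈ ℝ there is at most one T ∈ J satisfying the implicit condensation system E_int(T) = ε, i.e. the temperature (and hence also the vapour density ρ_v(T) and cloud density ρ_c(T)) recovered from the conserved variables is unique. 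-/
/-- Auxiliary: `(a-1) log T - b/T` is strictly monotone on a convex `J ⊆ (0,∞)`
where `(a-1)T + b > 0`. -/
lemma implicit_condensation_aux_strictMono (a b : ℝ) (J : Set ℝ)
    (hJ : J ⊆ Set.Ioi 0) (hJc : J.OrdConnected)
    (hpos : ∀ T ∈ J, 0 < (a - 1) * T + b) :
    StrictMonoOn (fun T : ℝ => (a - 1) * Real.log T - b * T⁻¹) J := by
  apply strictMonoOn_of_hasDerivWithinAt_pos hJc.convex
    (f' := fun T => ((a - 1) * T + b) / T ^ 2)
  · exact (continuousOn_const.mul (Real.continuousOn_log.mono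
      (fun x hx => ne_of_gt (hJ hx)))).sub (continuousOn_const.mul
      (continuousOn_inv₀.mono (fun x hx => ne_of_gt (hJ hx))))
  · intro x hx
    have hx0 : (0:ℝ) < x := hJ (interior_subset hx)
    have h1 : HasDerivAt (fun T : ℝ => (a - 1) * Real.log T - b * T⁻¹)
        ((a - 1) * x⁻¹ - b * (-(x ^ 2)⁻¹)) x :=
      ((Real.hasDerivAt_log hx0.ne').const_mul _).sub ((hasDerivAt_inv hx0.ne').const_mul _)
    have h2 : (a - 1) * x⁻¹ - b * (-(x ^ 2)⁻¹) = ((a - 1) * x + b) / x ^ 2 := by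
      field_simp; ring
    rw [h2] at h1
    exact h1.hasDerivWithinAt
  · intro x hx
    have hx0 : (0:ℝ) < x := hJ (interior_subset hx)
    exact div_pos (hpos x (interior_subset hx)) (by positivity)

/-- Uniqueness for the implicit condensation system: with
`ρ_v(T) = min(e_s(T)/(R_v T), ρ_m)`, `ρ_c(T) = ρ_m − ρ_v(T)` and the internal energy
`E_int(T) = (c_vd ρ_d + c_vv ρ_v(T) + c_l(ρ_c(T) + ρ_r))(T − T_ref)
  + ρ_v(T)(L_ref − R_v T_ref)`, the function `E_int` is strictly increasing on any
interval `J ⊆ (0, ∞)` on which `L(T) − R_v T > 0`; consequently for every `ε` there is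
at most one `T ∈ J` with `E_int(T) = ε`. -/
theorem implicit_condensation_uniqueness
    (e_ref T_ref R_v c_vd c_vv c_l : ℝ)
    (he_ref : 0 < e_ref) (hT_ref : 0 < T_ref) (hR_v : 0 < R_v)
    (hc_vd : 0 < c_vd) (hc_vv : 0 < c_vv) (hc_l : 0 < c_l)
    (L_ref c_pv : ℝ) (hc_pv : c_pv = c_vv + R_v)
    (es ρv ρc Eint : ℝ → ℝ)
    (hes : ∀ T : ℝ, es T =
      e_ref * (T / T_ref) ^ ((c_pv - c_l) / R_v)
        * Real.exp ((L_ref - (c_pv - c_l) * T_ref) / R_v * (1 / T_ref - 1 / T)))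
    (ρd ρm ρr : ℝ) (hρd : 0 < ρd) (hρm : 0 ≤ ρm) (hρr : 0 ≤ ρr)
    (hρv : ∀ T : ℝ, ρv T = min (es T / (R_v * T)) ρm)
    (hρc : ∀ T : ℝ, ρc T = ρm - ρv T)
    (hEint : ∀ T : ℝ, Eint T =
      (c_vd * ρd + c_vv * ρv T + c_l * (ρc T + ρr)) * (T - T_ref)
        + ρv T * (L_ref - R_v * T_ref))
    (J : Set ℝ) (hJ : J ⊆ Set.Ioi 0) (hJc : J.OrdConnected)
    (hL : ∀ T ∈ J, 0 < (L_ref + (c_pv - c_l) * (T - T_ref)) - R_v * T) :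
    StrictMonoOn Eint J ∧
      ∀ ε : ℝ, ∀ T₁ ∈ J, ∀ T₂ ∈ J, Eint T₁ = ε → Eint T₂ = ε → T₁ = T₂ := by
  set a : ℝ := (c_pv - c_l) / R_v with ha
  set b : ℝ := (L_ref - (c_pv - c_l) * T_ref) / R_v with hb
  set K : ℝ := e_ref / R_v * Real.exp (b * T_ref⁻¹ - a * Real.log T_ref) with hK
  have hKpos : 0 < K := by positivity
  -- rewrite es T / (R_v T) as K * exp(f T)
  have key : ∀ T ∈ J, es T / (R_v * T)
      = K * Real.exp ((a - 1) * Real.log T - b * T⁻¹) := by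
    intro T hT
    have hT0 : (0:ℝ) < T := hJ hT
    have hexp : (a - 1) * Real.log T - b * T⁻¹
        = a * (Real.log T - Real.log T_ref) + b * (1 / T_ref - 1 / T)
          + -(Real.log T) - (b * T_ref⁻¹ - a * Real.log T_ref) := by ring
    rw [hes, Real.rpow_def_of_pos (div_pos hT0 hT_ref), Real.log_div hT0.ne' hT_ref.ne',
      hexp, Real.exp_sub, Real.exp_add, Real.exp_add, Real.exp_neg, Real.exp_log hT0]
    rw [hK]
    field_simp
  -- positivity of saturation ratio
  have hqpos : ∀ T ∈ J, 0 < es T / (R_v * T) := by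
    intro T hT; rw [key T hT]; positivity
  -- monotonicity of the saturation ratio on J
  have hfmono : StrictMonoOn (fun T : ℝ => (a - 1) * Real.log T - b * T⁻¹) J := by
    apply implicit_condensation_aux_strictMono a b J hJ hJc
    intro T hT
    have h := hL T hT
    have : (a - 1) * T + b = ((L_ref + (c_pv - c_l) * (T - T_ref)) - R_v * T) / R_v := by
      rw [ha, hb]; field_simp; ring
    rw [this]
    exact div_pos h hR_v
  have hqmono : ∀ T₁ ∈ J, ∀ T₂ ∈ J, T₁ ≤ T₂ →
      es T₁ / (R_v * T₁) ≤ es T₂ / (R_v * T₂) := by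
    intro T₁ h₁ T₂ h₂ hle
    rcases hle.eq_or_lt with rfl | hlt
    · exact le_refl _
    · rw [key T₁ h₁, key T₂ h₂]
      exact mul_le_mul_of_nonneg_left (Real.exp_le_exp.2 (hfmono h₁ h₂ hlt).le) hKpos.le
  -- properties of ρv on J
  have hρv_nonneg : ∀ T ∈ J, 0 ≤ ρv T := by
    intro T hT; rw [hρv]; exact le_min (hqpos T hT).le hρm
  have hρv_le : ∀ T : ℝ, ρv T ≤ ρm := fun T => by rw [hρv]; exact min_le_right _ _
  have hρv_mono : ∀ T₁ ∈ J, ∀ T₂ ∈ J, T₁ ≤ T₂ → ρv T₁ ≤ ρv T₂ := by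
    intro T₁ h₁ T₂ h₂ hle
    rw [hρv, hρv]
    exact min_le_min (hqmono T₁ h₁ T₂ h₂ hle) le_rfl
  -- strict monotonicity of Eint
  have hsm : StrictMonoOn Eint J := by
    intro T₁ h₁ T₂ h₂ hlt
    have hB1 : 0 < (c_vv - c_l) * (T₁ - T_ref) + L_ref - R_v * T₁ + R_v * (T₁ - T_ref) := by
      have := hL T₁ h₁; rw [hc_pv] at this; nlinarith [this]
    have hB1' : 0 < (c_vv - c_l) * (T₁ - T_ref) + (L_ref - R_v * T_ref) := by linarith
    have hpos2 : 0 < c_vd * ρd + c_vv * ρv T₂ + c_l * (ρm - ρv T₂) + c_l * ρr := by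
      nlinarith [hρv_nonneg T₂ h₂, hρv_le T₂]
    have hv12 : ρv T₁ ≤ ρv T₂ := hρv_mono T₁ h₁ T₂ h₂ hlt.le
    rw [hEint, hEint, hρc, hρc]
    nlinarith [mul_nonneg (sub_nonneg.2 hv12) hB1'.le,
      mul_pos hpos2 (sub_pos.2 hlt)]
  exact ⟨hsm, fun ε T₁ h₁ T₂ h₂ e₁ e₂ => hsm.injOn h₁ h₂ (by rw [e₁, e₂])⟩
end
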